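/- For every nonzero rational number t, the only point of order 2 in the group E'_t(ℚ) is the point (0, 0); that is, E'_t(ℚ) contains exactly one point of order 2. -/

import Mathlib

open WeierstrassCurve

/-- The elliptic curve `E'_t : V² = U³ - 2(t² - 4)U² + (t² + 4)²U`. -/
noncomputable def Et' (t : ℚ) : WeierstrassCurve.Affine ℚ :=
  { a₁ := 0, a₂ := -2 * (t ^ 2 - 4), a₃ := 0, a₄ := (t ^ 2 + 4) ^ 2, a₆ := 0 }

lemma Et'_nonsingular_zero (t : ℚ) : (Et' t).Nonsingular 0 0 := by
  rw [Affine.nonsingular_iff, Affine.equation_iff]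
  simp only [Et']
  constructor
  · ring
  · left
    intro h
    nlinarith [sq_nonneg t, sq_nonneg (t ^ 2 + 4)]

theorem stmt_6 (t : ℚ) (ht : t ≠ 0) :
    ∃ h0 : (Et' t).Nonsingular 0 0,
      addOrderOf (Affine.Point.some _ _ h0) = 2 ∧
        ∀ P : (Et' t).Point, addOrderOf P = 2 → P = Affine.Point.some _ _ h0 := by
  refine ⟨Et'_nonsingular_zero t, ?_, ?_⟩
  · have h2 : (2 : ℕ).Prime := Nat.prime_two
    refine addOrderOf_eq_prime ?_ ?_
    · rw [two_nsmul]
      refine Affine.Point.add_self_of_Y_eq ?_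
      simp [Affine.negY, Et']
    · intro h
      exact (Affine.Point.some_ne_zero _) h
  · intro P hP
    have hPne : P ≠ 0 := by
      intro h
      rw [h, addOrderOf_zero] at hP
      norm_num at hP
    have h2P : 2 • P = 0 := by
      rw [← hP]; exact addOrderOf_nsmul_eq_zero P
    rw [two_nsmul] at h2P
    cases P with
    | zero => exact absurd rfl hPne
    | @some x y h =>
      by_cases hy : y = (Et' t).negY x y
      · -- y = -y so y = 0
        have hy0 : y = 0 := by
          simp only [Affine.negY, Et'] at hy
          linarith
        subst hy0
        have heq := h.1
        rw [Affine.equation_iff] at heq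
        simp only [Et'] at heq
        have hx0 : x = 0 := by
          by_contra hx
          have hq : x ^ 2 - 2 * (t ^ 2 - 4) * x + (t ^ 2 + 4) ^ 2 = 0 := by
            have : x * (x ^ 2 - 2 * (t ^ 2 - 4) * x + (t ^ 2 + 4) ^ 2) = 0 := by
              ring_nf
              ring_nf at heq
              linarith
            rcases mul_eq_zero.mp this with h' | h'
            · exact absurd h' hx
            · exact h'
          nlinarith [sq_nonneg (x - (t ^ 2 - 4)), sq_nonneg t, pow_pos (by positivity : (0:ℚ) < t ^ 2) 1]
        subst hx0
        rfl
      · rw [Affine.Point.add_self_of_Y_ne hy] at h2P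
        exact absurd h2P (Affine.Point.some_ne_zero _)
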